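/- With notation as in the previous item but with an extra factor λ^{2ε} (ε > 0) in the integrand, i.e. F̃(σ,t) = c σ^{-(n-2)} ∫_0^∞ e^{itλ} λ^{1+2ε-(n+1)/2} η(λ) ((1-φ)𝒥)(σλ) dλ, one has the bound |F̃(σ,t)| ≤ C_ε σ^{-(n-1)/2} uniformly in σ ≥ 1 and t ∈ ℝ. -/

import Mathlib

open MeasureTheory Real Set

/-- Estimate (A.9): the extra factor `λ^{2ε}` removes the logarithm:
`|F̃(σ,t)| ≤ C_ε σ^{-(n-1)/2}` uniformly in `σ ≥ 1`, `t`. -/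
theorem stmt_10 (n : ℕ) (hn : 3 ≤ n) (ε : ℝ) (hε : 0 < ε) (c : ℂ)
    (G : ℝ → ℂ) (CG : ℝ)
    (hG : ∀ z : ℝ, 0 < z → ‖G z‖ ≤ CG * z ^ (((n:ℝ) - 3)/2))
    (hG0 : ∀ z : ℝ, |z| ≤ 1 → G z = 0)
    (η : ℝ → ℂ) (Cη c₂ : ℝ) (hc₂ : 0 < c₂)
    (hηb : ∀ l : ℝ, ‖η l‖ ≤ Cη) (hηs : ∀ l : ℝ, l ∉ Ioc 0 c₂ → η l = 0) :
    ∃ Cε : ℝ, ∀ σ : ℝ, 1 ≤ σ → ∀ t : ℝ,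
      ‖c * ((σ ^ (-((n:ℝ) - 2)) : ℝ) : ℂ) * ∫ l in Ioi (0:ℝ),
          Complex.exp (Complex.I * t * l) * ((l ^ (1 + 2*ε - ((n:ℝ) + 1)/2) : ℝ) : ℂ) *
            η l * G (σ * l)‖
        ≤ Cε * σ ^ (-((n:ℝ) - 1)/2) := by
  have hCη : 0 ≤ Cη := le_trans (norm_nonneg _) (hηb 0)
  have hCG : 0 ≤ CG := by
    have := hG 1 one_pos
    simpa using le_trans (norm_nonneg _) this
  set a : ℝ := ((n:ℝ) - 3)/2 with ha
  set p : ℝ := 1 + 2*ε - ((n:ℝ) + 1)/2 with hp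
  set I : ℝ := ∫ l in Ioc (0:ℝ) c₂, l ^ (2*ε - 1) with hI
  have hInn : 0 ≤ I := by
    apply setIntegral_nonneg measurableSet_Ioc
    intro l hl
    exact Real.rpow_nonneg hl.1.le _
  refine ⟨‖c‖ * (Cη * CG * I), ?_⟩
  intro σ hσ t
  have hσ0 : (0:ℝ) < σ := lt_of_lt_of_le one_pos hσ
  set K : ℝ := Cη * CG * σ ^ a with hK
  have hK0 : 0 ≤ K := by positivity
  set g : ℝ → ℝ := (Ioc (0:ℝ) c₂).indicator (fun l => K * l ^ (2*ε - 1)) with hg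
  have hgint : Integrable g := by
    rw [hg, integrable_indicator_iff measurableSet_Ioc]
    apply Integrable.const_mul
    have : IntervalIntegrable (fun l : ℝ => l ^ (2*ε - 1)) volume 0 c₂ :=
      intervalIntegral.intervalIntegrable_rpow' (by linarith)
    have h := this.1
    exact (intervalIntegrable_iff_integrableOn_Ioc_of_le hc₂.le).mp this
  have hbound : ∀ l ∈ Ioi (0:ℝ),
      ‖Complex.exp (Complex.I * t * l) * ((l ^ p : ℝ) : ℂ) * η l * G (σ * l)‖ ≤ g l := by
    intro l hl
    have hl0 : (0:ℝ) < l := hl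
    by_cases hmem : l ∈ Ioc (0:ℝ) c₂
    · have hg1 : g l = K * l ^ (2*ε - 1) := by
        rw [hg, indicator_of_mem hmem]
      have hexp : ‖Complex.exp (Complex.I * t * l)‖ = 1 := by
        rw [Complex.norm_exp]
        simp [Complex.mul_re]
      have hG' : ‖G (σ * l)‖ ≤ CG * (σ * l) ^ a := hG _ (by positivity)
      calc ‖Complex.exp (Complex.I * t * l) * ((l ^ p : ℝ) : ℂ) * η l * G (σ * l)‖
          = ‖Complex.exp (Complex.I * t * l)‖ * ‖((l ^ p : ℝ) : ℂ)‖ * ‖η l‖ * ‖G (σ * l)‖ := by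
            simp [norm_mul]
        _ = l ^ p * (‖η l‖ * ‖G (σ * l)‖) := by
            rw [hexp, Complex.norm_real, Real.norm_eq_abs,
              abs_of_nonneg (rpow_nonneg hl0.le _)]
            ring
        _ ≤ l ^ p * (Cη * (CG * (σ * l) ^ a)) := by
            have h2 : ‖η l‖ * ‖G (σ * l)‖ ≤ Cη * (CG * (σ * l) ^ a) :=
              mul_le_mul (hηb l) hG' (norm_nonneg _) hCη
            exact mul_le_mul_of_nonneg_left h2 (rpow_nonneg hl0.le _)
        _ = K * l ^ (2*ε - 1) := by
            have hpa : p + a = 2*ε - 1 := by rw [hp, ha]; ring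
            rw [mul_rpow hσ0.le hl0.le, hK,
              show l ^ p * (Cη * (CG * (σ ^ a * l ^ a))) = Cη * CG * σ ^ a * (l ^ p * l ^ a) by
                ring, ← Real.rpow_add hl0, hpa]
        _ = g l := hg1.symm
    · have h0 : η l = 0 := hηs l hmem
      rw [hg, indicator_of_notMem hmem]
      simp [h0]
  have hnorm : ‖∫ l in Ioi (0:ℝ),
      Complex.exp (Complex.I * t * l) * ((l ^ p : ℝ) : ℂ) * η l * G (σ * l)‖
      ≤ ∫ l in Ioi (0:ℝ), g l := by
    apply norm_integral_le_of_norm_le hgint.integrableOn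
    exact (ae_restrict_iff' measurableSet_Ioi).mpr (Filter.Eventually.of_forall hbound)
  have hgval : ∫ l in Ioi (0:ℝ), g l ≤ K * I := by
    have h1 : ∫ l in Ioi (0:ℝ), g l ≤ ∫ l, g l := by
      apply setIntegral_le_integral hgint
      apply Filter.Eventually.of_forall
      intro l
      show (0:ℝ) ≤ g l
      rw [hg]
      by_cases hmem : l ∈ Ioc (0:ℝ) c₂
      · rw [indicator_of_mem hmem]
        have := hmem.1
        positivity
      · rw [indicator_of_notMem hmem]
    have h2 : ∫ l, g l = K * I := by
      rw [hg, integral_indicator measurableSet_Ioc, hI, ← integral_const_mul]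
    linarith
  calc ‖c * ((σ ^ (-((n:ℝ) - 2)) : ℝ) : ℂ) * ∫ l in Ioi (0:ℝ),
          Complex.exp (Complex.I * t * l) * ((l ^ p : ℝ) : ℂ) * η l * G (σ * l)‖
      = ‖c‖ * σ ^ (-((n:ℝ) - 2)) * ‖∫ l in Ioi (0:ℝ),
          Complex.exp (Complex.I * t * l) * ((l ^ p : ℝ) : ℂ) * η l * G (σ * l)‖ := by
        rw [norm_mul, norm_mul, Complex.norm_real, Real.norm_eq_abs,
          abs_of_nonneg (rpow_nonneg hσ0.le _)]
    _ ≤ ‖c‖ * σ ^ (-((n:ℝ) - 2)) * (K * I) := by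
        gcongr
        exact le_trans hnorm hgval
    _ = ‖c‖ * (Cη * CG * I) * σ ^ (-((n:ℝ) - 1)/2) := by
        rw [hK]
        have h3 : σ ^ (-((n:ℝ) - 2)) * σ ^ a = σ ^ (-((n:ℝ) - 1)/2) := by
          rw [← Real.rpow_add hσ0, ha]
          ring_nf
        rw [← h3]
        ring
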